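/- Let H be a free abelian group of finite rank and Al(H,α) the twisted group algebra over a field K with alternating bimultiplicative quantization parameter α. Then the set of invertible elements of Al(H,α) is exactly {a·e(h) : a ∈ K*, h ∈ H}. -/

import Mathlib

open Finsupp

/-- Twisted group algebra multiplication on `Al(H,α) = H →₀ K`. -/
noncomputable def tmul {K : Type*} [Field K] {H : Type*} [AddCommGroup H]
    (α : H → H → Kˣ) (x y : H →₀ K) : H →₀ K :=
  x.sum fun h a => y.sum fun g b => Finsupp.single (h + g) (a * b * (α h g : K))

/-- The basis element `e(h)`; `e(0)` is the unit of `Al(H,α)`. -/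
noncomputable def eAl {K : Type*} [Field K] {H : Type*} [AddCommGroup H] (h : H) : H →₀ K :=
  Finsupp.single h (1 : K)

open Classical in
lemma tmul_apply' {K : Type*} [Field K] {H : Type*} [AddCommGroup H]
    (α : H → H → Kˣ) (x y : H →₀ K) (t : H) :
    tmul α x y t = ∑ h ∈ x.support, ∑ g ∈ y.support,
      if h + g = t then x h * y g * (α h g : K) else 0 := by
  rw [tmul, Finsupp.sum_apply, Finsupp.sum]
  refine Finset.sum_congr rfl fun h _ => ?_
  rw [Finsupp.sum_apply, Finsupp.sum]
  refine Finset.sum_congr rfl fun g _ => ?_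
  rw [Finsupp.single_apply]


lemma tmul_single {K : Type*} [Field K] {H : Type*} [AddCommGroup H]
    (α : H → H → Kˣ) (h g : H) (a b : K) :
    tmul α (Finsupp.single h a) (Finsupp.single g b) =
      Finsupp.single (h + g) (a * b * (α h g : K)) := by
  rw [tmul, Finsupp.sum_single_index, Finsupp.sum_single_index]
  · simp
  · rw [Finsupp.sum_single_index] <;> simp

open Classical in
lemma key_half {K : Type*} [Field K] {H : Type*} [AddCommGroup H] [LinearOrder H]
    (hadd : ∀ a b c : H, a ≤ b → a + c ≤ b + c)
    (α : H → H → Kˣ) (x y : H →₀ K) (hxy : tmul α x y = eAl 0) :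
    ∃ (a : Kˣ) (h : H), x = (a : K) • eAl h := by
  have haddlt : ∀ a b c : H, a < b → a + c < b + c := fun a b c hlt =>
    lt_of_le_of_ne (hadd _ _ _ hlt.le) fun e => hlt.ne (add_right_cancel e)
  have hx : x ≠ 0 := by
    rintro rfl
    rw [tmul, Finsupp.sum_zero_index] at hxy
    exact one_ne_zero (Finsupp.single_eq_zero.mp hxy.symm)
  have hy : y ≠ 0 := by
    rintro rfl
    rw [tmul] at hxy
    simp only [Finsupp.sum_zero_index, Finsupp.sum, Finsupp.support_zero, Finset.sum_empty,
      Finset.sum_const_zero] at hxy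
    exact one_ne_zero (Finsupp.single_eq_zero.mp hxy.symm)
  have hxs : x.support.Nonempty := Finsupp.support_nonempty_iff.mpr hx
  have hys : y.support.Nonempty := Finsupp.support_nonempty_iff.mpr hy
  set Mx := x.support.max' hxs with hMx
  set My := y.support.max' hys with hMy
  set mx := x.support.min' hxs with hmx
  set my := y.support.min' hys with hmy
  -- evaluation at max
  have evalmax : tmul α x y (Mx + My) = x Mx * y My * (α Mx My : K) := by
    rw [tmul_apply']
    rw [Finset.sum_eq_single_of_mem Mx (x.support.max'_mem hxs)]
    · rw [Finset.sum_eq_single_of_mem My (y.support.max'_mem hys), if_pos rfl]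
      intro g hg hgne
      rw [if_neg]
      intro he
      exact hgne (add_left_cancel he)
    · intro h hh hne
      refine Finset.sum_eq_zero fun g hg => ?_
      rw [if_neg]
      intro he
      have h1 : h < Mx := (x.support.le_max' h hh).lt_of_ne hne
      have h2 : g ≤ My := y.support.le_max' g hg
      have : h + g < Mx + My := lt_of_lt_of_le (haddlt _ _ _ h1)
        (by rw [add_comm Mx g, add_comm Mx My]; exact hadd _ _ _ h2)
      exact this.ne he
  have evalmin : tmul α x y (mx + my) = x mx * y my * (α mx my : K) := by
    rw [tmul_apply']
    rw [Finset.sum_eq_single_of_mem mx (x.support.min'_mem hxs)]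
    · rw [Finset.sum_eq_single_of_mem my (y.support.min'_mem hys), if_pos rfl]
      intro g hg hgne
      rw [if_neg]
      intro he
      exact hgne (add_left_cancel he)
    · intro h hh hne
      refine Finset.sum_eq_zero fun g hg => ?_
      rw [if_neg]
      intro he
      have h1 : mx < h := (x.support.min'_le h hh).lt_of_ne (Ne.symm hne)
      have h2 : my ≤ g := y.support.min'_le g hg
      have : mx + my < h + g := lt_of_lt_of_le (haddlt _ _ _ h1)
        (by rw [add_comm h my, add_comm h g]; exact hadd _ _ _ h2)
      exact this.ne he.symm
  have hvne : ∀ h ∈ x.support, ∀ g ∈ y.support, x h * y g * (α h g : K) ≠ 0 := by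
    intro h hh g hg
    exact mul_ne_zero (mul_ne_zero (Finsupp.mem_support_iff.mp hh)
      (Finsupp.mem_support_iff.mp hg)) (α h g).ne_zero
  have hMeq : Mx + My = 0 := by
    by_contra hne
    have : tmul α x y (Mx + My) = 0 := by
      rw [hxy, eAl]; exact Finsupp.single_eq_of_ne' fun e => hne e.symm
    rw [evalmax] at this
    exact hvne _ (x.support.max'_mem hxs) _ (y.support.max'_mem hys) this
  have hmeq : mx + my = 0 := by
    by_contra hne
    have : tmul α x y (mx + my) = 0 := by
      rw [hxy, eAl]; exact Finsupp.single_eq_of_ne' fun e => hne e.symm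
    rw [evalmin] at this
    exact hvne _ (x.support.min'_mem hxs) _ (y.support.min'_mem hys) this
  have hMm : mx = Mx := by
    by_contra hne
    have h1 : mx < Mx := (x.support.min'_le Mx (x.support.max'_mem hxs)).lt_of_ne hne
    have h2 : my ≤ My := y.support.min'_le My (y.support.max'_mem hys)
    have : mx + my < Mx + My := lt_of_lt_of_le (haddlt _ _ _ h1)
      (by rw [add_comm Mx my, add_comm Mx My]; exact hadd _ _ _ h2)
    rw [hMeq, hmeq] at this
    exact lt_irrefl _ this
  have hsupp : x.support = {Mx} := by
    apply Finset.eq_singleton_iff_unique_mem.mpr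
    refine ⟨x.support.max'_mem hxs, fun h hh => le_antisymm (x.support.le_max' h hh) ?_⟩
    rw [← hMm]; exact x.support.min'_le h hh
  obtain ⟨hne, hxeq⟩ := Finsupp.support_eq_singleton.mp hsupp
  refine ⟨Units.mk0 (x Mx) hne, Mx, ?_⟩
  rw [eAl, Finsupp.smul_single, smul_eq_mul, mul_one, Units.val_mk0]
  exact hxeq

theorem stmt2 {K : Type*} [Field K] {H : Type*} [AddCommGroup H]
    [Module.Free ℤ H] [Module.Finite ℤ H]
    (α : H → H → Kˣ)
    (halt : ∀ h g, α h g * α g h = 1)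
    (hbil₁ : ∀ h₁ h₂ g, α (h₁ + h₂) g = α h₁ g * α h₂ g)
    (hbil₂ : ∀ h g₁ g₂, α h (g₁ + g₂) = α h g₁ * α h g₂) :
    {x : H →₀ K | ∃ y : H →₀ K, tmul α x y = eAl 0 ∧ tmul α y x = eAl 0} =
    {x : H →₀ K | ∃ (a : Kˣ) (h : H), x = (a : K) • eAl h} := by
  ext x
  simp only [Set.mem_setOf_eq]
  constructor
  · rintro ⟨y, h1, _⟩
    -- pull back a linear order from Lex (Fin n →₀ ℤ)
    let b := Module.Free.chooseBasis ℤ H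
    let eqι : Module.Free.ChooseBasisIndex ℤ H ≃ Fin _ :=
      Fintype.equivFin (Module.Free.ChooseBasisIndex ℤ H)
    let f : H → Lex (Fin (Fintype.card (Module.Free.ChooseBasisIndex ℤ H)) →₀ ℤ) :=
      fun h => toLex (Finsupp.domCongr eqι (b.repr h))
    have hf : Function.Injective f := fun a b' hab =>
      b.repr.injective ((Finsupp.domCongr eqι).injective (toLex.injective hab))
    have hfadd : ∀ a b' : H, f (a + b') = f a + f b' := by
      intro a b'
      show toLex (Finsupp.domCongr eqι (b.repr (a + b'))) = _
      rw [map_add, map_add]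
      rfl
    letI : LinearOrder H := LinearOrder.lift' f hf
    have hadd : ∀ a b' c : H, a ≤ b' → a + c ≤ b' + c := by
      intro a b' c hab
      have hab' : f a ≤ f b' := hab
      show f (a + c) ≤ f (b' + c)
      rw [hfadd, hfadd]
      exact add_le_add hab' le_rfl
    exact key_half hadd α x y h1
  · rintro ⟨a, h, rfl⟩
    -- basic facts about α
    have h0 : ∀ g : H, α g 0 = 1 := fun g => by
      have := hbil₂ g 0 0
      rw [add_zero] at this
      exact (mul_eq_left.mp this.symm)
    have h0' : ∀ g : H, α 0 g = 1 := fun g => by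
      have := hbil₁ 0 0 g
      rw [add_zero] at this
      exact (mul_eq_left.mp this.symm)
    have hinv : α h (-h) = α (-h) h := by
      have e1 : α h (-h) * α h h = 1 := by
        rw [← hbil₂ h (-h) h, neg_add_cancel, h0]
      have e2 : α (-h) h * α h h = 1 := by
        rw [← hbil₁ (-h) h h, neg_add_cancel, h0']
      have := e1.trans e2.symm
      exact mul_right_cancel this
    refine ⟨((a⁻¹ * (α h (-h))⁻¹ : Kˣ) : K) • eAl (-h), ?_, ?_⟩
    · rw [eAl, eAl, Finsupp.smul_single, Finsupp.smul_single, smul_eq_mul, mul_one,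
        smul_eq_mul, mul_one, tmul_single, add_neg_cancel]
      congr 1
      push_cast
      field_simp
    · rw [eAl, eAl, Finsupp.smul_single, Finsupp.smul_single, smul_eq_mul, mul_one,
        smul_eq_mul, mul_one, tmul_single, neg_add_cancel]
      congr 1
      rw [← hinv]
      push_cast
      field_simp
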